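/- Let r ≥ 1 and let (v_1,…,v_r) be a system of linear functionals on ℂ[x] whose moment matrix M admits a Gauss–Borel factorisation M = A·B. Define monic polynomials P_n (n ∈ ℕ) by the relations x^n = Σ_{k=0}^{n} A_{n,k} P_k(x). Then for all n, k ∈ ℕ and 0 ≤ j ≤ r−1 one has ⟨v_{j+1}, x^k P_n(x)⟩ = B_{n, rk+j}; in particular deg P_n = n, ⟨v_{j+1}, x^k P_n⟩ = 0 whenever rk + j < n, and ⟨v_{j+1}, x^k P_n⟩ = B_{n,n} ≠ 0 whenever rk + j = n, so (P_n) is the sequence of type II multiple orthogonal polynomials on the step-line with respect to (v_1,…,v_r). -/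

import Mathlib

open Polynomial Finset

noncomputable section

/-- A linear functional on `ℂ[x]`. -/
abbrev LF := Polynomial ℂ →ₗ[ℂ] ℂ

/-- The moment matrix of a system of `r` linear functionals (0-indexed:
`v j` is the paper's `v_{j+1}`): entry `(n, r*k+j)` is `⟨v_{j+1}, x^{k+n}⟩`. -/
def momentMatrix (r : ℕ) (v : ℕ → LF) (n ℓ : ℕ) : ℂ :=
  v (ℓ % r) (Polynomial.X ^ (ℓ / r + n))

/-- A Gauss–Borel factorisation `M = A·B` of the moment matrix: `A` unit
lower triangular, `B` upper triangular with nonzero diagonal. -/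
structure GaussBorel (r : ℕ) (v : ℕ → LF) (A B : ℕ → ℕ → ℂ) : Prop where
  A_diag : ∀ n, A n n = 1
  A_upper : ∀ n ℓ, n < ℓ → A n ℓ = 0
  B_lower : ∀ n ℓ, ℓ < n → B n ℓ = 0
  B_diag : ∀ n, B n n ≠ 0
  factor : ∀ n ℓ, momentMatrix r v n ℓ = ∑ k ∈ Finset.range (n + 1), A n k * B k ℓ

theorem stmt0 (r : ℕ) (hr : 1 ≤ r) (v : ℕ → LF) (A B : ℕ → ℕ → ℂ)
    (hGB : GaussBorel r v A B) (P : ℕ → Polynomial ℂ)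
    (hP : ∀ n, (Polynomial.X : Polynomial ℂ) ^ n
      = ∑ k ∈ Finset.range (n + 1), Polynomial.C (A n k) * P k) :
    (∀ n k j, j < r → v j (Polynomial.X ^ k * P n) = B n (r * k + j)) ∧
    (∀ n, (P n).Monic ∧ (P n).natDegree = n) ∧
    (∀ n k j, j < r → r * k + j < n → v j (Polynomial.X ^ k * P n) = 0) ∧
    (∀ n k j, j < r → r * k + j = n →
      v j (Polynomial.X ^ k * P n) = B n n ∧ B n n ≠ 0) := by
  -- recursion formula for P n
  have hPn : ∀ n, P n = X ^ n - ∑ m ∈ Finset.range n, C (A n m) * P m := by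
    intro n
    have h := hP n
    rw [Finset.sum_range_succ, hGB.A_diag, map_one, one_mul] at h
    linear_combination -h
  -- key orthogonality relation
  have key : ∀ n k j, j < r → v j (X ^ k * P n) = B n (r * k + j) := by
    intro n
    induction n using Nat.strong_induction_on with
    | _ n ih =>
      intro k j hj
      have hmod : (r * k + j) % r = j := by
        rw [Nat.mul_add_mod, Nat.mod_eq_of_lt hj]
      have hdiv : (r * k + j) / r = k := by
        rw [Nat.mul_add_div (by omega), Nat.div_eq_of_lt hj, add_zero]
      have hmom : v j (X ^ (k + n)) = momentMatrix r v n (r * k + j) := by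
        rw [momentMatrix, hmod, hdiv]
      have hsum : ∀ m ∈ Finset.range n,
          v j (X ^ k * (C (A n m) * P m)) = A n m * B m (r * k + j) := by
        intro m hm
        have : X ^ k * (C (A n m) * P m) = A n m • (X ^ k * P m) := by
          rw [smul_eq_C_mul]; ring
        rw [this, map_smul, smul_eq_mul, ih m (Finset.mem_range.mp hm) k j hj]
      calc v j (X ^ k * P n)
          = v j (X ^ (k + n)) - ∑ m ∈ Finset.range n, v j (X ^ k * (C (A n m) * P m)) := by
            rw [hPn n, mul_sub, map_sub, Finset.mul_sum, map_sum, pow_add]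
        _ = momentMatrix r v n (r * k + j) - ∑ m ∈ Finset.range n, A n m * B m (r * k + j) := by
            rw [hmom, Finset.sum_congr rfl hsum]
        _ = B n (r * k + j) := by
            rw [hGB.factor, Finset.sum_range_succ, hGB.A_diag]; ring
  -- monic and degree
  have hdeg : ∀ n, (P n).Monic ∧ (P n).natDegree = n := by
    intro n
    induction n using Nat.strong_induction_on with
    | _ n ih =>
      have hS : (∑ m ∈ Finset.range n, C (A n m) * P m).degree < (n : ℕ) := by
        apply lt_of_le_of_lt (Polynomial.degree_sum_le _ _)
        rw [Finset.sup_lt_iff (by exact_mod_cast WithBot.bot_lt_coe n)]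
        intro m hm
        calc (C (A n m) * P m).degree ≤ (P m).degree := (degree_mul_le _ _).trans (by simpa using add_le_add degree_C_le le_rfl)
          _ = ((P m).natDegree : WithBot ℕ) :=
              degree_eq_natDegree (ih m (Finset.mem_range.mp hm)).1.ne_zero
          _ < (n : ℕ) := by
              exact_mod_cast (ih m (Finset.mem_range.mp hm)).2 ▸
                (Nat.cast_lt.mpr (Finset.mem_range.mp hm))
      have hS' : (∑ m ∈ Finset.range n, C (A n m) * P m).degree
          < ((X : Polynomial ℂ) ^ n).degree := by rwa [degree_X_pow]
      constructor
      · rw [hPn n, sub_eq_add_neg]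
        exact (monic_X_pow n).add_of_left (by rwa [degree_neg])
      · rw [hPn n]
        have := Polynomial.degree_sub_eq_left_of_degree_lt hS'
        rw [degree_X_pow] at this
        exact natDegree_eq_of_degree_eq_some this
  refine ⟨key, hdeg, ?_, ?_⟩
  · intro n k j hj hlt
    rw [key n k j hj, hGB.B_lower _ _ hlt]
  · intro n k j hj heq
    exact ⟨by rw [key n k j hj, heq], hGB.B_diag n⟩
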